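/- Let h be a homeomorphism of the Cantor space satisfying: for every m ∈ ℕ there is a partition P of mesh < 1/m such that every component of Γ(h,P) is a dumbbell. Then h has the shadowing property: for every ε > 0 there exists δ > 0 such that every δ-pseudotrajectory (x_n)_{n∈ℤ} of h is ε-shadowed by a real trajectory, i.e., there exists x with d(x_n, hⁿ(x)) < ε for all n ∈ ℤ. -/

import Mathlib

noncomputable def cantorDist (σ τ : ℕ → Bool) : ℝ :=
  letI := Classical.propDecidable (∃ n, σ n ≠ τ n)
  if h : ∃ n, σ n ≠ τ n then 1 / (Nat.find h + 1) else 0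

def IsPartition (P : Finset (Set (ℕ → Bool))) : Prop :=
  (∀ a ∈ P, IsClopen a ∧ a.Nonempty) ∧
  (∀ a ∈ P, ∀ b ∈ P, a ≠ b → Disjoint a b) ∧
  ⋃₀ (P : Set (Set (ℕ → Bool))) = Set.univ

noncomputable def cantorDiam (A : Set (ℕ → Bool)) : ℝ :=
  sSup {r | ∃ σ ∈ A, ∃ τ ∈ A, r = cantorDist σ τ}

noncomputable def mesh (C : Set (Set (ℕ → Bool))) : ℝ :=
  sSup (cantorDiam '' C)

def gammaEdge (f : (ℕ → Bool) → (ℕ → Bool)) (a b : Set (ℕ → Bool)) : Prop :=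
  (f '' a ∩ b).Nonempty

def balloonEdge (s m : ℕ) (a b : Fin (s + m)) : Prop :=
  b.val = a.val + 1 ∨ (a.val = s + m - 1 ∧ b.val = s)

def dumbbellEdge (r s t : ℕ) (a b : Fin (r + s + t)) : Prop :=
  (b.val = a.val + 1 ∧ a.val + 1 ≠ r) ∨
  (a.val = r - 1 ∧ b.val = 0) ∨
  (a.val = 0 ∧ b.val = r) ∨
  (a.val = r + s + t - 1 ∧ b.val = r + s)

/-- Every component of `Γ(h,P)` is a dumbbell. -/
def AllComponentsDumbbells (h : (ℕ → Bool) → (ℕ → Bool))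
    (P : Finset (Set (ℕ → Bool))) : Prop :=
  ∃ (k : ℕ) (r s t : Fin k → ℕ),
    (∀ i, 0 < r i) ∧ (∀ i, 0 < s i) ∧ (∀ i, 0 < t i) ∧
    ∃ e : {a // a ∈ P} ≃ (Σ i : Fin k, Fin (r i + s i + t i)),
      ∀ a b : {a // a ∈ P}, gammaEdge h a.val b.val ↔
        ∃ heq : (e a).1 = (e b).1,
          dumbbellEdge (r (e b).1) (s (e b).1) (t (e b).1)
            (Fin.cast (by rw [heq]) (e a).2) (e b).2

/-- The `n`-th iterate of a homeomorphism, for `n : ℤ`. -/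
noncomputable def ziter (h : (ℕ → Bool) ≃ₜ (ℕ → Bool)) (n : ℤ) (x : ℕ → Bool) : ℕ → Bool :=
  if 0 ≤ n then (⇑h)^[n.toNat] x else (⇑h.symm)^[(-n).toNat] x



lemma cantorDist_nonneg (σ τ : ℕ → Bool) : 0 ≤ cantorDist σ τ := by
  unfold cantorDist
  split
  · positivity
  · exact le_refl 0

lemma cantorDist_le_one (σ τ : ℕ → Bool) : cantorDist σ τ ≤ 1 := by
  unfold cantorDist
  split
  · rw [div_le_one (by positivity)]
    have : (0:ℝ) ≤ (Nat.find ‹∃ n, σ n ≠ τ n› : ℝ) := by positivity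
    linarith
  · norm_num

lemma agree_of_cantorDist_le {u v : ℕ → Bool} {N : ℕ}
    (hd : cantorDist u v ≤ 1 / ((N : ℝ) + 1)) : ∀ i < N, u i = v i := by
  intro i hi
  by_contra hne
  have hex : ∃ n, u n ≠ v n := ⟨i, hne⟩
  rw [cantorDist] at hd
  rw [dif_pos hex] at hd
  have h1 : Nat.find hex ≤ i := Nat.find_le hne
  have h2 : ((N:ℝ) + 1) ≤ (Nat.find hex : ℝ) + 1 := by
    rw [div_le_div_iff₀ (by positivity) (by positivity)] at hd
    linarith
  have : (N:ℝ) ≤ (Nat.find hex : ℝ) := by linarith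
  have : N ≤ Nat.find hex := by exact_mod_cast this
  omega


lemma cyl_isOpen (ρ : ℕ → Bool) (N : ℕ) : IsOpen {τ : ℕ → Bool | ∀ i < N, τ i = ρ i} := by
  have hset : {τ : ℕ → Bool | ∀ i < N, τ i = ρ i}
      = ⋂ i ∈ Set.Iio N, (fun τ : ℕ → Bool => τ i) ⁻¹' {ρ i} := by
    ext τ; simp [Set.mem_iInter]
  rw [hset]
  exact (Set.finite_Iio N).isOpen_biInter fun i _ =>
    (isOpen_discrete _).preimage (continuous_apply i)

lemma clopen_determined {a : Set (ℕ → Bool)} (ha : IsClopen a) :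
    ∃ N : ℕ, ∀ ρ τ : ℕ → Bool, (∀ i < N, τ i = ρ i) → ρ ∈ a → τ ∈ a := by
  have hcyl : ∀ ρ : ℕ → Bool, ∃ N : ℕ,
      {τ : ℕ → Bool | ∀ i < N, τ i = ρ i} ⊆ a ∨ {τ : ℕ → Bool | ∀ i < N, τ i = ρ i} ⊆ aᶜ := by
    intro ρ
    by_cases hρ : ρ ∈ a
    · obtain ⟨I, u, hu, hsub⟩ := isOpen_pi_iff.mp ha.isOpen ρ hρ
      refine ⟨I.sup id + 1, Or.inl ?_⟩
      intro τ hτ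
      apply hsub
      intro i hi
      have hle : i < I.sup id + 1 := Nat.lt_succ_of_le (Finset.le_sup (f := id) hi)
      rw [hτ i hle]
      exact (hu i hi).2
    · obtain ⟨I, u, hu, hsub⟩ := isOpen_pi_iff.mp ha.compl.isOpen ρ hρ
      refine ⟨I.sup id + 1, Or.inr ?_⟩
      intro τ hτ
      apply hsub
      intro i hi
      have hle : i < I.sup id + 1 := Nat.lt_succ_of_le (Finset.le_sup (f := id) hi)
      rw [hτ i hle]
      exact (hu i hi).2
  choose f hf using hcyl
  have hcov : a ⊆ ⋃ ρ, {τ : ℕ → Bool | ∀ i < f ρ, τ i = ρ i} :=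
    fun σ hσ => Set.mem_iUnion.mpr ⟨σ, fun i _ => rfl⟩
  obtain ⟨F, hF⟩ := (ha.isClosed.isCompact).elim_finite_subcover _ (fun ρ => cyl_isOpen ρ (f ρ)) hcov
  refine ⟨F.sup f, ?_⟩
  intro ρ τ hagree hρ
  have := hF hρ
  rw [Set.mem_iUnion₂] at this
  obtain ⟨ρ₀, hρ₀F, hρmem⟩ := this
  rcases hf ρ₀ with hsub | hsub
  · apply hsub
    intro i hi
    have hiN : i < F.sup f := lt_of_lt_of_le hi (Finset.le_sup hρ₀F)
    rw [hagree i hiN]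
    exact hρmem i hi
  · exact absurd (hsub hρmem) (by simpa using hρ)


lemma ziter_eq_pow (h : (ℕ → Bool) ≃ₜ (ℕ → Bool)) (n : ℤ) :
    ziter h n = ⇑(h.toEquiv ^ n) := by
  rcases n with m | m
  · show ziter h (m : ℤ) = ⇑(h.toEquiv ^ (m : ℤ))
    unfold ziter
    funext x
    rw [if_pos (Int.natCast_nonneg m)]
    show (⇑h)^[(m:ℤ).toNat] x = (h.toEquiv ^ (m : ℤ)) x
    rw [Int.toNat_natCast]
    rw [zpow_natCast, Equiv.Perm.coe_pow]
    rfl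
  · unfold ziter
    funext x
    rw [if_neg (by simp [Int.negSucc_eq]; omega)]
    show (⇑h.symm)^[(-Int.negSucc m).toNat] x = _
    rw [zpow_negSucc, ← inv_pow, Equiv.Perm.coe_pow]
    have h1 : (-Int.negSucc m).toNat = m + 1 := by simp [Int.negSucc_eq]
    rw [h1]
    rfl

lemma ziter_add (h : (ℕ → Bool) ≃ₜ (ℕ → Bool)) (m n : ℤ) (y : ℕ → Bool) :
    ziter h (m + n) y = ziter h m (ziter h n y) := by
  simp only [ziter_eq_pow, zpow_add, Equiv.Perm.mul_apply]

lemma ziter_natCast (h : (ℕ → Bool) ≃ₜ (ℕ → Bool)) (k : ℕ) (y : ℕ → Bool) :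
    ziter h (k : ℤ) y = (⇑h)^[k] y := by
  rw [ziter, if_pos (by exact_mod_cast Nat.zero_le k)]
  simp

lemma ziter_negNat (h : (ℕ → Bool) ≃ₜ (ℕ → Bool)) (k : ℕ) (y : ℕ → Bool) :
    ziter h (-(k : ℤ)) y = (⇑h.symm)^[k] y := by
  rcases Nat.eq_zero_or_pos k with hk | hk
  · subst hk; simp [ziter]
  · rw [ziter, if_neg (by omega)]
    simp

lemma continuous_ziter (h : (ℕ → Bool) ≃ₜ (ℕ → Bool)) (n : ℤ) :
    Continuous (ziter h n) := by
  unfold ziter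
  split
  · exact h.continuous.iterate _
  · exact h.symm.continuous.iterate _

def dEdge (r s t a b : ℕ) : Prop :=
  (b = a + 1 ∧ a + 1 ≠ r) ∨ (a = r - 1 ∧ b = 0) ∨ (a = 0 ∧ b = r) ∨
  (a = r + s + t - 1 ∧ b = r + s)

lemma dEdge_succ_unique {r s t a b b' : ℕ} (hr : 0 < r) (hs : 0 < s) (ht : 0 < t)
    (hb : b < r + s + t) (hb' : b' < r + s + t) (ha : a ≠ 0)
    (h1 : dEdge r s t a b) (h2 : dEdge r s t a b') : b = b' := by
  rcases h1 with ⟨e1, e2⟩ | ⟨e1, e2⟩ | ⟨e1, e2⟩ | ⟨e1, e2⟩ <;>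
    rcases h2 with ⟨f1, f2⟩ | ⟨f1, f2⟩ | ⟨f1, f2⟩ | ⟨f1, f2⟩ <;> omega

lemma dEdge_pred_unique {r s t a a' b : ℕ} (hr : 0 < r) (hs : 0 < s) (ht : 0 < t)
    (ha : a < r + s + t) (ha' : a' < r + s + t) (hb : b ≠ r + s)
    (h1 : dEdge r s t a b) (h2 : dEdge r s t a' b) : a = a' := by
  rcases h1 with ⟨e1, e2⟩ | ⟨e1, e2⟩ | ⟨e1, e2⟩ | ⟨e1, e2⟩ <;>
    rcases h2 with ⟨f1, f2⟩ | ⟨f1, f2⟩ | ⟨f1, f2⟩ | ⟨f1, f2⟩ <;> omega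

lemma dEdge_mono {r s t a b : ℕ} (hr : 0 < r) (hs : 0 < s) (ht : 0 < t)
    (hedge : dEdge r s t a b) (ha : r ≤ a) : r ≤ b := by
  rcases hedge with ⟨e1, e2⟩ | ⟨e1, e2⟩ | ⟨e1, e2⟩ | ⟨e1, e2⟩ <;> omega

lemma dEdge_cross {r s t a b : ℕ} (hr : 0 < r) (hs : 0 < s) (ht : 0 < t)
    (hb1 : b < r + s + t) (hedge : dEdge r s t a b) (ha : a < r) (hb : r ≤ b) :
    a = 0 ∧ b = r := by
  rcases hedge with ⟨e1, e2⟩ | ⟨e1, e2⟩ | ⟨e1, e2⟩ | ⟨e1, e2⟩ <;> omega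


lemma core (h : (ℕ → Bool) ≃ₜ (ℕ → Bool)) (A : ℤ → Set (ℕ → Bool))
    (hAclosed : ∀ n : ℤ, IsClosed (A n)) (hAne : ∀ n : ℤ, (A n).Nonempty)
    (R S T : ℕ) (hr : 0 < R) (hs : 0 < S) (ht : 0 < T)
    (v : ℤ → ℕ) (hvlt : ∀ n : ℤ, v n < R + S + T)
    (hEdgeNum : ∀ n : ℤ, dEdge R S T (v n) (v (n + 1)))
    (hF1 : ∀ n : ℤ, v n ≠ 0 → ∀ z ∈ A n, h z ∈ A (n + 1))
    (hF2 : ∀ n : ℤ, v (n + 1) ≠ R + S → ∀ z ∈ A (n + 1), h.symm z ∈ A n) :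
    ∃ y : ℕ → Bool, ∀ n : ℤ, ziter h n y ∈ A n := by
  have FwdChain : ∀ (n₀ : ℤ) (z : ℕ → Bool), z ∈ A n₀ → (∀ p : ℤ, n₀ ≤ p → v p ≠ 0) →
      ∀ j : ℕ, (⇑h)^[j] z ∈ A (n₀ + j) := by
    intro n₀ z hz hne j
    induction j with
    | zero => simpa using hz
    | succ j ih =>
      have hcast : (n₀ + ((j+1 : ℕ) : ℤ)) = (n₀ + j) + 1 := by push_cast; ring
      rw [hcast, Function.iterate_succ_apply']
      exact hF1 (n₀ + j) (hne _ (by omega)) _ ih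
  have BwdChain : ∀ (n₀ : ℤ) (z : ℕ → Bool), z ∈ A n₀ → (∀ p : ℤ, p ≤ n₀ → v p ≠ R + S) →
      ∀ j : ℕ, (⇑h.symm)^[j] z ∈ A (n₀ - j) := by
    intro n₀ z hz hne j
    induction j with
    | zero => simpa using hz
    | succ j ih =>
      have hcast : (n₀ - ((j+1 : ℕ) : ℤ)) = (n₀ - j) - 1 := by push_cast; ring
      have harg : (n₀ - (j:ℤ) - 1) + 1 = n₀ - j := by ring
      rw [hcast, Function.iterate_succ_apply']
      apply hF2 (n₀ - j - 1) (by rw [harg]; exact hne _ (by omega))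
      rw [harg]; exact ih
  have Anchor : ∀ (n₀ : ℤ) (z : ℕ → Bool), z ∈ A n₀ →
      (∀ p : ℤ, n₀ ≤ p → v p ≠ 0) → (∀ p : ℤ, p ≤ n₀ → v p ≠ R + S) →
      ∀ n : ℤ, ziter h n (ziter h (-n₀) z) ∈ A n := by
    intro n₀ z hz hf hb n
    have hzi : ziter h n (ziter h (-n₀) z) = ziter h (n - n₀) z := by
      rw [← ziter_add, sub_eq_add_neg]
    rw [hzi]
    rcases le_or_gt n₀ n with hle | hlt
    · have hk : n - n₀ = (((n - n₀).toNat : ℕ) : ℤ) := by omega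
      rw [hk, ziter_natCast]
      have hres := FwdChain n₀ z hz hf (n - n₀).toNat
      have hnn : n₀ + (((n - n₀).toNat : ℕ) : ℤ) = n := by omega
      rwa [hnn] at hres
    · have hk : n - n₀ = -((((n₀ - n).toNat : ℕ)) : ℤ) := by omega
      rw [hk, ziter_negNat]
      have hres := BwdChain n₀ z hz hb (n₀ - n).toNat
      have hnn : n₀ - (((n₀ - n).toNat : ℕ) : ℤ) = n := by omega
      rwa [hnn] at hres
  have up : ∀ p q : ℤ, p ≤ q → R ≤ v p → R ≤ v q := by
    intro p q hpq hp
    exact Int.le_induction hp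
      (fun n _ ih => dEdge_mono hr hs ht (hEdgeNum n) ih) q hpq
  have hCne : ∀ K : ℕ, ∃ y : ℕ → Bool, ∀ n : ℤ, -(K:ℤ) ≤ n ∧ n ≤ K → ziter h n y ∈ A n := by
    intro K
    by_cases hA : ∀ n : ℤ, v n < R
    · obtain ⟨z, hz⟩ := hAne (K : ℤ)
      refine ⟨ziter h (-(K:ℤ)) z, ?_⟩
      rintro n ⟨h1, h2⟩
      have hzi : ziter h n (ziter h (-(K:ℤ)) z) = ziter h (n - K) z := by
        rw [← ziter_add, sub_eq_add_neg]
      rw [hzi]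
      have hk : n - (K:ℤ) = -((((K:ℤ) - n).toNat : ℕ) : ℤ) := by omega
      rw [hk, ziter_negNat]
      have hres := BwdChain K z hz (fun p _ => by have := hA p; omega) ((K:ℤ) - n).toNat
      have hnn : (K:ℤ) - ((((K:ℤ) - n).toNat : ℕ) : ℤ) = n := by omega
      rwa [hnn] at hres
    · by_cases hB : ∀ n : ℤ, R ≤ v n
      · obtain ⟨z, hz⟩ := hAne (-(K:ℤ))
        refine ⟨ziter h ((K:ℤ)) z, ?_⟩
        rintro n ⟨h1, h2⟩
        have hzi : ziter h n (ziter h ((K:ℤ)) z) = ziter h (n + K) z := by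
          rw [← ziter_add]
        rw [hzi]
        have hk : n + (K:ℤ) = (((n + K).toNat : ℕ) : ℤ) := by omega
        rw [hk, ziter_natCast]
        have hres := FwdChain (-(K:ℤ)) z hz (fun p _ => by have := hB p; omega) (n + K).toNat
        have hnn : -(K:ℤ) + ((((n + (K:ℤ)).toNat) : ℕ) : ℤ) = n := by omega
        rwa [hnn] at hres
      · push_neg at hA hB
        obtain ⟨p, hp⟩ := hA
        obtain ⟨q, hq⟩ := hB
        have hqp : q < p := by
          by_contra hc
          push_neg at hc
          have := up p q hc hp
          omega
        have hexk : ∃ j : ℕ, R ≤ v (q + j) := by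
          refine ⟨(p - q).toNat, ?_⟩
          have hcq : q + (((p - q).toNat : ℕ) : ℤ) = p := by omega
          rw [hcq]; exact hp
        classical
        have hj₀spec : R ≤ v (q + (Nat.find hexk : ℤ)) := Nat.find_spec hexk
        have hj₀pos : Nat.find hexk ≠ 0 := by
          intro hz0
          rw [hz0] at hj₀spec
          simp at hj₀spec
          omega
        set n₀ : ℤ := q + (Nat.find hexk : ℤ) with hn₀def
        have hprev : ¬ R ≤ v (q + ((Nat.find hexk - 1 : ℕ) : ℤ)) :=
          Nat.find_min hexk (by omega)
        have hprev' : v (n₀ - 1) < R := by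
          have hc : (q + ((Nat.find hexk - 1 : ℕ) : ℤ)) = n₀ - 1 := by
            rw [hn₀def]; push_cast [Nat.cast_sub (by omega : 1 ≤ Nat.find hexk)]; ring
          rw [hc] at hprev; omega
        have hedge₀ : dEdge R S T (v (n₀ - 1)) (v n₀) := by
          have hres := hEdgeNum (n₀ - 1)
          rwa [show n₀ - 1 + 1 = n₀ by ring] at hres
        have hcross := dEdge_cross hr hs ht (hvlt n₀) hedge₀ hprev' hj₀spec
        have hdown : ∀ p' : ℤ, p' ≤ n₀ - 1 → v p' < R := by
          intro p' hp'
          by_contra hc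
          push_neg at hc
          have := up p' (n₀ - 1) hp' hc
          omega
        obtain ⟨z, hz⟩ := hAne n₀
        refine ⟨ziter h (-n₀) z, fun n _ => ?_⟩
        refine Anchor n₀ z hz ?_ ?_ n
        · intro p' hp'
          have := up n₀ p' hp' (by omega)
          omega
        · intro p' hp'
          rcases eq_or_lt_of_le hp' with hpe | hpl
          · rw [hpe]; omega
          · have := hdown p' (by omega); omega
  set C : ℕ → Set (ℕ → Bool) := fun K =>
    ⋂ (n : ℤ), ⋂ (_ : -(K:ℤ) ≤ n ∧ n ≤ (K:ℤ)), (ziter h n) ⁻¹' (A n) with hCdef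
  have hCmem : ∀ (K : ℕ) (y : ℕ → Bool),
      y ∈ C K ↔ ∀ n : ℤ, -(K:ℤ) ≤ n ∧ n ≤ K → ziter h n y ∈ A n := by
    intro K y
    rw [hCdef]
    constructor
    · intro hy n hn
      exact Set.mem_iInter.mp (Set.mem_iInter.mp hy n) hn
    · intro hy
      exact Set.mem_iInter.mpr fun n => Set.mem_iInter.mpr fun hn => hy n hn
  have hCclosed : ∀ K, IsClosed (C K) := by
    intro K
    rw [hCdef]
    exact isClosed_iInter fun n => isClosed_iInter fun _ =>
      (hAclosed n).preimage (continuous_ziter h n)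
  have hCsub : ∀ K, C (K + 1) ⊆ C K := by
    intro K y hy
    rw [hCmem] at hy ⊢
    intro n hn
    exact hy n (by push_cast; omega)
  have hCne' : ∀ K, (C K).Nonempty := by
    intro K
    obtain ⟨y, hy⟩ := hCne K
    exact ⟨y, (hCmem K y).mpr hy⟩
  obtain ⟨y, hy⟩ := IsCompact.nonempty_iInter_of_sequence_nonempty_isCompact_isClosed
    C hCsub hCne' ((hCclosed 0).isCompact) hCclosed
  refine ⟨y, fun n => ?_⟩
  have hyC : y ∈ C n.natAbs := Set.mem_iInter.mp hy n.natAbs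
  exact (hCmem _ y).mp hyC n (by constructor <;> omega)


lemma sigma_fin_eq {k : ℕ} {f : Fin k → ℕ} {x y : Σ i : Fin k, Fin (f i)}
    (h1 : x.1 = y.1) (h2 : (x.2 : ℕ) = (y.2 : ℕ)) : x = y := by
  obtain ⟨i, p⟩ := x
  obtain ⟨j, q⟩ := y
  dsimp at h1
  subst h1
  dsimp at h2
  exact congrArg (Sigma.mk i) (Fin.ext h2)

lemma dEdge_param {k : ℕ} (r s t : Fin k → ℕ) {i j : Fin k} (hij : i = j) {p q : ℕ}
    (hd : dEdge (r i) (s i) (t i) p q) : dEdge (r j) (s j) (t j) p q := hij ▸ hd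

lemma lt_param {k : ℕ} (r s t : Fin k → ℕ) {i j : Fin k} (hij : i = j) {p : ℕ}
    (hp : p < r i + s i + t i) : p < r j + s j + t j := hij ▸ hp

theorem shadowing_property (h : (ℕ → Bool) ≃ₜ (ℕ → Bool))
    (hyp : ∀ m : ℕ, 0 < m → ∃ P : Finset (Set (ℕ → Bool)), IsPartition P ∧
      mesh (↑P : Set (Set (ℕ → Bool))) < 1 / (m : ℝ) ∧ AllComponentsDumbbells (⇑h) P) :
    ∀ ε : ℝ, 0 < ε → ∃ δ : ℝ, 0 < δ ∧
      ∀ x : ℤ → (ℕ → Bool), (∀ n : ℤ, cantorDist (h (x n)) (x (n + 1)) ≤ δ) →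
        ∃ y : ℕ → Bool, ∀ n : ℤ, cantorDist (x n) (ziter h n y) < ε := by
  classical
  intro ε hε
  obtain ⟨m', hm'⟩ := exists_nat_gt (1 / ε)
  have hm0 : 0 < m' + 1 := Nat.succ_pos _
  have hminv : 1 / ((m' + 1 : ℕ) : ℝ) < ε := by
    rw [div_lt_iff₀ (by positivity)]
    rw [div_lt_iff₀ hε] at hm'
    push_cast
    nlinarith
  obtain ⟨P, hPart, hmesh, hACD⟩ := hyp (m' + 1) hm0
  obtain ⟨hclo, hdisj, hcover⟩ := hPart
  obtain ⟨k, r, s, t, hr, hs, ht, e, he⟩ := hACD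
  -- separation constant
  have hNa : ∀ a : Set (ℕ → Bool), ∃ N : ℕ, a ∈ P →
      ∀ ρ τ : ℕ → Bool, (∀ i < N, τ i = ρ i) → ρ ∈ a → τ ∈ a := by
    intro a
    by_cases haP : a ∈ P
    · obtain ⟨N, hN⟩ := clopen_determined (hclo a haP).1
      exact ⟨N, fun _ => hN⟩
    · exact ⟨0, fun hmem => absurd hmem haP⟩
  choose g hg using hNa
  refine ⟨1 / (((P.sup g : ℕ) : ℝ) + 1), by positivity, ?_⟩
  intro x hx
  have hmemAll : ∀ z : ℕ → Bool, ∃ a, a ∈ P ∧ z ∈ a := by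
    intro z
    have hz : z ∈ ⋃₀ (P : Set (Set (ℕ → Bool))) := by rw [hcover]; trivial
    obtain ⟨a, haP, hza⟩ := hz
    exact ⟨a, haP, hza⟩
  choose A hAP hAx using fun n : ℤ => hmemAll (x n)
  -- the pseudo-orbit respects the partition
  have hstep : ∀ n : ℤ, h (x n) ∈ A (n + 1) := by
    intro n
    have hagree := agree_of_cantorDist_le (hx n)
    refine hg (A (n+1)) (hAP (n+1)) (x (n+1)) (h (x n)) ?_ (hAx (n+1))
    intro i hi
    exact hagree i (lt_of_lt_of_le hi (Finset.le_sup (hAP (n+1))))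
  have hedge : ∀ n : ℤ, gammaEdge ⇑h (A n) (A (n + 1)) :=
    fun n => ⟨h (x n), ⟨x n, hAx n, rfl⟩, hstep n⟩
  -- component constancy
  set i₀ : Fin k := (e ⟨A 0, hAP 0⟩).1 with hi₀
  have hci : ∀ n : ℤ, (e ⟨A n, hAP n⟩).1 = i₀ := by
    intro n
    induction n using Int.induction_on with
    | zero => exact hi₀.symm
    | succ i ih =>
      obtain ⟨h1, _⟩ := (he ⟨A i, hAP i⟩ ⟨A (i+1), hAP (i+1)⟩).1 (hedge i)
      exact h1.symm.trans ih
    | pred i ih =>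
      obtain ⟨h1, _⟩ := (he ⟨A (-i-1), hAP (-i-1)⟩ ⟨A (-i-1+1), hAP (-i-1+1)⟩).1 (hedge (-i-1))
      have h2 : (-(i:ℤ) - 1) + 1 = -(i:ℤ) := by ring
      rw [h2] at h1
      exact h1.trans ih
  have hvlt : ∀ n : ℤ, ((e ⟨A n, hAP n⟩).2 : ℕ) < r i₀ + s i₀ + t i₀ :=
    fun n => lt_param r s t (hci n) (e ⟨A n, hAP n⟩).2.isLt
  have hEdgeNum : ∀ n : ℤ,
      dEdge (r i₀) (s i₀) (t i₀) ((e ⟨A n, hAP n⟩).2 : ℕ) ((e ⟨A (n+1), hAP (n+1)⟩).2 : ℕ) := by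
    intro n
    obtain ⟨h1, h2⟩ := (he ⟨A n, hAP n⟩ ⟨A (n+1), hAP (n+1)⟩).1 (hedge n)
    have h3 : dEdge (r (e ⟨A (n+1), hAP (n+1)⟩).1) (s (e ⟨A (n+1), hAP (n+1)⟩).1)
        (t (e ⟨A (n+1), hAP (n+1)⟩).1)
        ((e ⟨A n, hAP n⟩).2 : ℕ) ((e ⟨A (n+1), hAP (n+1)⟩).2 : ℕ) := h2
    exact dEdge_param r s t (hci (n+1)) h3
  have hF1 : ∀ n : ℤ, ((e ⟨A n, hAP n⟩).2 : ℕ) ≠ 0 → ∀ z ∈ A n, h z ∈ A (n + 1) := by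
    intro n hn z hz
    obtain ⟨b, hbP, hzb⟩ := hmemAll (h z)
    have hgb : gammaEdge ⇑h (A n) b := ⟨h z, ⟨z, hz, rfl⟩, hzb⟩
    obtain ⟨h1, h2⟩ := (he ⟨A n, hAP n⟩ ⟨b, hbP⟩).1 hgb
    have hj : (e ⟨b, hbP⟩).1 = i₀ := h1.symm.trans (hci n)
    have h3 : dEdge (r (e ⟨b, hbP⟩).1) (s (e ⟨b, hbP⟩).1) (t (e ⟨b, hbP⟩).1)
        ((e ⟨A n, hAP n⟩).2 : ℕ) ((e ⟨b, hbP⟩).2 : ℕ) := h2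
    have h4 := dEdge_param r s t hj h3
    have h5 : ((e ⟨b, hbP⟩).2 : ℕ) < r i₀ + s i₀ + t i₀ :=
      lt_param r s t hj (e ⟨b, hbP⟩).2.isLt
    have h6 : ((e ⟨b, hbP⟩).2 : ℕ) = ((e ⟨A (n+1), hAP (n+1)⟩).2 : ℕ) :=
      dEdge_succ_unique (hr i₀) (hs i₀) (ht i₀) h5 (hvlt (n+1)) hn h4 (hEdgeNum n)
    have h7 : e ⟨b, hbP⟩ = e ⟨A (n+1), hAP (n+1)⟩ :=
      sigma_fin_eq (hj.trans (hci (n+1)).symm) h6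
    have h9 : b = A (n + 1) := congrArg Subtype.val (e.injective h7)
    rw [← h9]; exact hzb
  have hF2 : ∀ n : ℤ, ((e ⟨A (n+1), hAP (n+1)⟩).2 : ℕ) ≠ r i₀ + s i₀ →
      ∀ z ∈ A (n + 1), h.symm z ∈ A n := by
    intro n hn z hz
    obtain ⟨b, hbP, hwb⟩ := hmemAll (h.symm z)
    have hgb : gammaEdge ⇑h b (A (n+1)) :=
      ⟨h (h.symm z), ⟨h.symm z, hwb, rfl⟩, by rw [h.apply_symm_apply]; exact hz⟩
    obtain ⟨h1, h2⟩ := (he ⟨b, hbP⟩ ⟨A (n+1), hAP (n+1)⟩).1 hgb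
    have hj : (e ⟨b, hbP⟩).1 = i₀ := h1.trans (hci (n+1))
    have h3 : dEdge (r (e ⟨A (n+1), hAP (n+1)⟩).1) (s (e ⟨A (n+1), hAP (n+1)⟩).1)
        (t (e ⟨A (n+1), hAP (n+1)⟩).1)
        ((e ⟨b, hbP⟩).2 : ℕ) ((e ⟨A (n+1), hAP (n+1)⟩).2 : ℕ) := h2
    have h4 := dEdge_param r s t (hci (n+1)) h3
    have h5 : ((e ⟨b, hbP⟩).2 : ℕ) < r i₀ + s i₀ + t i₀ :=
      lt_param r s t hj (e ⟨b, hbP⟩).2.isLt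
    have h6 : ((e ⟨b, hbP⟩).2 : ℕ) = ((e ⟨A n, hAP n⟩).2 : ℕ) :=
      dEdge_pred_unique (hr i₀) (hs i₀) (ht i₀) h5 (hvlt n) hn h4 (hEdgeNum n)
    have h7 : e ⟨b, hbP⟩ = e ⟨A n, hAP n⟩ :=
      sigma_fin_eq (hj.trans (hci n).symm) h6
    have h9 : b = A n := congrArg Subtype.val (e.injective h7)
    rw [← h9]; exact hwb
  obtain ⟨y, hy⟩ := core h A (fun n => (hclo _ (hAP n)).1.isClosed)
    (fun n => ⟨x n, hAx n⟩) (r i₀) (s i₀) (t i₀) (hr i₀) (hs i₀) (ht i₀)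
    (fun n => ((e ⟨A n, hAP n⟩).2 : ℕ)) hvlt hEdgeNum hF1 hF2
  refine ⟨y, fun n => ?_⟩
  have hyn : ziter h n y ∈ A n := hy n
  have hd1 : cantorDist (x n) (ziter h n y) ≤ cantorDiam (A n) := by
    apply le_csSup
    · refine ⟨1, ?_⟩
      rintro d ⟨σ, hσ, τ, hτ, rfl⟩
      exact cantorDist_le_one σ τ
    · exact ⟨x n, hAx n, ziter h n y, hyn, rfl⟩
  have hd2 : cantorDiam (A n) ≤ mesh (↑P : Set (Set (ℕ → Bool))) := by
    apply le_csSup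
    · refine ⟨1, ?_⟩
      rintro d ⟨a, ha, rfl⟩
      apply Real.sSup_le
      · rintro d' ⟨σ, hσ, τ, hτ, rfl⟩
        exact cantorDist_le_one σ τ
      · norm_num
    · exact Set.mem_image_of_mem _ (Finset.mem_coe.mpr (hAP n))
  calc cantorDist (x n) (ziter h n y) ≤ cantorDiam (A n) := hd1
    _ ≤ mesh (↑P : Set (Set (ℕ → Bool))) := hd2
    _ < 1 / ((m' + 1 : ℕ) : ℝ) := hmesh
    _ < ε := hminv
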